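/- Let ℓ ≥ 1 and N > 2ℓ+2, with periodic boundary conditions or special boundary conditions s = (c₁, c_N), and Ñ = N − (ℓ+2). For every ψ' ∈ V_Ñ there exists a state φ' ∈ V_N such that Q₂ (G ψ') = (−1)^ℓ ( G (Q̃ ψ') + Q₁ φ' ), where Q̃ is the unit-coupling supercharge of the Ñ-site chain with the corresponding boundary conditions. -/

import Mathlib

attribute [local instance 10] Classical.propDecidable
set_option maxHeartbeats 1000000

noncomputable section

/-- A configuration of `N` sites: `true` = occupied, `false` = empty. -/
abbrev Config (N : ℕ) := Fin N → Bool

/-- Extension of a configuration to all of `ℕ`, by empty sites outside the chain. -/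
def extc {N : ℕ} (σ : Config N) (t : ℕ) : Bool :=
  if h : t < N then σ ⟨t, h⟩ else false

/-- The fermion number: the number of occupied sites. -/
def fermions {N : ℕ} (σ : Config N) : ℕ :=
  (Finset.univ.filter fun i => σ i = true).card

/-- Allowed configurations of the open chain of `N` sites with exclusion parameter `ℓ`
and special boundary conditions `(c₁, cN)`: no cluster is longer than `ℓ`, the cluster
containing the first site (if occupied) has length at most `c₁`, and the cluster
containing the last site (if occupied) has length at most `cN`. -/
def OpenOK (N ℓ c₁ cN : ℕ) (σ : Config N) : Prop :=
  (∀ a : ℕ, ¬ ∀ k ≤ ℓ, extc σ (a + k) = true) ∧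
  (¬ (c₁ + 1 ≤ N ∧ ∀ k ≤ c₁, extc σ k = true)) ∧
  (¬ (cN + 1 ≤ N ∧ ∀ k ≤ cN, extc σ (N - 1 - k) = true))

/-- Cyclic shift of a site of the closed chain by `k` steps. -/
def cyc {N : ℕ} (i : Fin N) (k : ℕ) : Fin N :=
  ⟨(i.1 + k) % N, Nat.mod_lt _ i.pos⟩

/-- Allowed configurations of the closed chain of `N` sites with periodic boundary
conditions: the chain is not fully occupied and no maximal cyclic run of occupied
sites is longer than `ℓ`. -/
def PerOK (N ℓ : ℕ) (σ : Config N) : Prop :=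
  ∀ i : Fin N, ∃ k ≤ ℓ, σ (cyc i k) = false

/-- The fermionic sign `(-1)^{#{j < i : σ j = 1}}`. -/
def sgn {N : ℕ} (σ : Config N) (i : Fin N) : ℂ :=
  (-1 : ℂ) ^ ((Finset.univ.filter fun j => j < i ∧ σ j = true).card)

/-- The Hilbert space `V_N`: complex functions on allowed configurations. -/
abbrev AState (N : ℕ) (OK : Config N → Prop) := {σ : Config N // OK σ} → ℂ

/-- Matrix of the supercharge with amplitudes `A`, with particle insertion
restricted to the sublattice `S`: the entry `(τ, σ)` is the amplitude (with fermionic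
sign) for obtaining `τ` from `σ` by occupying an empty site of `S`. -/
def QmatA (N : ℕ) (OK : Config N → Prop) (S : Fin N → Prop)
    (A : Config N → Fin N → ℂ) :
    Matrix {σ : Config N // OK σ} {σ : Config N // OK σ} ℂ := fun τ σ =>
  ∑ i : Fin N,
    if S i ∧ σ.1 i = false ∧ τ.1 = Function.update σ.1 i true
    then A σ.1 i * sgn σ.1 i else 0

/-- The supercharge with amplitudes `A` restricted to the sublattice `S`, as a linear map. -/
def QopA (N : ℕ) (OK : Config N → Prop) (S : Fin N → Prop)
    (A : Config N → Fin N → ℂ) : AState N OK →ₗ[ℂ] AState N OK :=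
  (QmatA N OK S A).mulVecLin

/-- The unit-coupling supercharge restricted to the sublattice `S`. -/
def Qop (N : ℕ) (OK : Config N → Prop) (S : Fin N → Prop) :
    AState N OK →ₗ[ℂ] AState N OK :=
  QopA N OK S fun _ _ => 1

/-- The subspace `V_{N,f}` of states supported on configurations with fermion number `f`. -/
def gradeV (N : ℕ) (OK : Config N → Prop) (f : ℕ) :
    Submodule ℂ (AState N OK) where
  carrier := {ψ | ∀ σ, fermions σ.1 ≠ f → ψ σ = 0}
  add_mem' := by
    intro a b ha hb σ h
    show a σ + b σ = 0
    rw [ha σ h, hb σ h, add_zero]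
  zero_mem' := by intro σ h; rfl
  smul_mem' := by
    intro c a ha σ h
    show c * a σ = 0
    rw [ha σ h, mul_zero]

/-- The first sublattice `S₁ = {1, …, ℓ+2}` (the first `ℓ+2` sites). -/
def S1 (N ℓ : ℕ) : Fin N → Prop := fun i => i.1 < ℓ + 2

/-- The second sublattice `S₂ = {ℓ+3, …, N}` (the remaining sites). -/
def S2 (N ℓ : ℕ) : Fin N → Prop := fun i => ℓ + 2 ≤ i.1

/-- The configuration `χ σ'`: the `(ℓ+2)`-site configuration `χ = 0 1…1 0`
followed by the `Ñ`-site configuration `σ'`. -/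
def glue (ℓ Nt : ℕ) (σ : Config Nt) : Config (Nt + (ℓ + 2)) := fun i =>
  if h : i.1 < ℓ + 2 then decide (1 ≤ i.1 ∧ i.1 ≤ ℓ)
  else σ ⟨i.1 - (ℓ + 2), by have h2 := i.isLt; omega⟩

/-- Matrix of the map `G : V_Ñ → V_N`, `e_{σ'} ↦ e_{χ σ'}`. -/
def Gmat (ℓ Nt : ℕ) (OKN : Config (Nt + (ℓ + 2)) → Prop) (OKt : Config Nt → Prop) :
    Matrix {σ : Config (Nt + (ℓ + 2)) // OKN σ} {σ : Config Nt // OKt σ} ℂ :=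
  fun τ σ => if τ.1 = glue ℓ Nt σ.1 then 1 else 0

/-- The linear map `G : V_Ñ → V_N` sending `e_{σ'}` to `e_{χ σ'}`. -/
def Gop (ℓ Nt : ℕ) (OKN : Config (Nt + (ℓ + 2)) → Prop) (OKt : Config Nt → Prop) :
    AState Nt OKt →ₗ[ℂ] AState (Nt + (ℓ + 2)) OKN :=
  (Gmat ℓ Nt OKN OKt).mulVecLin

section basics
variable (ℓ Nt : ℕ)

def emb (i : Fin Nt) : Fin (Nt + (ℓ + 2)) := ⟨ℓ + 2 + i.1, by omega⟩

variable {ℓ Nt}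

lemma glue_low (σ : Config Nt) (i : Fin (Nt + (ℓ+2))) (h : i.1 < ℓ + 2) :
    glue ℓ Nt σ i = decide (1 ≤ i.1 ∧ i.1 ≤ ℓ) := by simp [glue, h]

lemma glue_emb (σ : Config Nt) (i : Fin Nt) : glue ℓ Nt σ (emb ℓ Nt i) = σ i := by
  have h : ¬ (ℓ + 2 + i.1 < ℓ + 2) := by omega
  simp only [glue, emb, dif_neg h]
  congr 1
  exact (dif_neg h).trans (congrArg σ (Fin.ext (show ℓ + 2 + i.1 - (ℓ + 2) = i.1 by omega)))

lemma glue_mid (σ : Config Nt) (i : Fin (Nt + (ℓ+2))) (h1 : 1 ≤ i.1) (h2 : i.1 ≤ ℓ) :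
    glue ℓ Nt σ i = true := by
  rw [glue_low σ i (by omega)]; simp [h1, h2]

lemma glue_zero (σ : Config Nt) (i : Fin (Nt + (ℓ+2))) (h : i.1 = 0) :
    glue ℓ Nt σ i = false := by
  rw [glue_low σ i (by omega)]; simp [h]

lemma glue_top (σ : Config Nt) (i : Fin (Nt + (ℓ+2))) (h : i.1 = ℓ + 1) :
    glue ℓ Nt σ i = false := by
  rw [glue_low σ i (by omega)]; simp [h]

lemma glue_inj : Function.Injective (glue ℓ Nt) := by
  intro a b h
  funext i
  have := congrFun h (emb ℓ Nt i)
  rwa [glue_emb, glue_emb] at this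

lemma update_glue (σ : Config Nt) (i : Fin Nt) :
    Function.update (glue ℓ Nt σ) (emb ℓ Nt i) true
      = glue ℓ Nt (Function.update σ i true) := by
  funext j
  rcases eq_or_ne j (emb ℓ Nt i) with rfl | hne
  · rw [Function.update_self, glue_emb, Function.update_self]
  · rw [Function.update_of_ne hne]
    by_cases hj : j.1 < ℓ + 2
    · rw [glue_low _ _ hj, glue_low _ _ hj]
    · have hj' : j = emb ℓ Nt ⟨j.1 - (ℓ+2), by have := j.isLt; omega⟩ := Fin.ext (by simp [emb]; omega)
      rw [hj', glue_emb, glue_emb, Function.update_of_ne]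
      intro hc
      exact hne (by rw [hj', hc])

lemma extc_glue (σ : Config Nt) (t : ℕ) :
    extc (glue ℓ Nt σ) (ℓ + 2 + t) = extc σ t := by
  unfold extc
  by_cases h : t < Nt
  · rw [dif_pos (by omega : ℓ + 2 + t < Nt + (ℓ+2)), dif_pos h]
    have : (⟨ℓ+2+t, by omega⟩ : Fin (Nt + (ℓ+2))) = emb ℓ Nt ⟨t, h⟩ := rfl
    rw [this, glue_emb]
  · rw [dif_neg (by omega), dif_neg h]

end basics
section sums
variable {ℓ Nt : ℕ}

def esum (ℓ Nt : ℕ) : Fin (ℓ+2) ⊕ Fin Nt ≃ Fin (Nt + (ℓ+2)) :=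
  (finSumFinEquiv).trans (finCongr (by omega))

lemma esum_inl (j : Fin (ℓ+2)) : (esum ℓ Nt (Sum.inl j)).1 = j.1 := by
  simp [esum]

lemma esum_inr (i : Fin Nt) : (esum ℓ Nt (Sum.inr i)).1 = ℓ + 2 + i.1 := by
  simp [esum]; omega

lemma sum_split {M : Type*} [AddCommMonoid M] (f : Fin (Nt + (ℓ+2)) → M) :
    ∑ j, f j = (∑ j : Fin (ℓ+2), f ⟨j.1, by omega⟩)
      + ∑ i : Fin Nt, f ⟨ℓ + 2 + i.1, by omega⟩ := by
  refine ((Equiv.sum_comp (esum ℓ Nt) f).symm.trans ?_)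
  rw [Fintype.sum_sum_type]
  refine congrArg₂ (· + ·) ?_ ?_
  · exact Finset.sum_congr rfl fun j _ => congrArg f (Fin.ext (esum_inl j))
  · exact Finset.sum_congr rfl fun i _ => congrArg f (Fin.ext (esum_inr i))

lemma card_filter_vals (m lo hi : ℕ) (h : hi ≤ m) :
    (Finset.univ.filter fun j : Fin m => lo ≤ j.1 ∧ j.1 < hi).card = hi - lo := by
  rw [← Nat.card_Ico]
  apply Finset.card_bij' (fun (j : Fin m) _ => j.1) (fun t ht => (⟨t, by
      simp only [Finset.mem_Ico] at ht; omega⟩ : Fin m))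
  case hi => intro a ha; simp only [Finset.mem_filter, Finset.mem_univ, true_and] at ha
             simp only [Finset.mem_Ico]; omega
  case hj => intro t ht; simp only [Finset.mem_Ico] at ht
             simp only [Finset.mem_filter, Finset.mem_univ, true_and]; omega
  case left_inv => intro a ha; rfl
  case right_inv => intro t ht; rfl

end sums

section sgnlem
variable {ℓ Nt : ℕ}

lemma sgn_glue (σ : Config Nt) (i : Fin Nt) :
    sgn (glue ℓ Nt σ) (emb ℓ Nt i) = (-1 : ℂ)^ℓ * sgn σ i := by
  unfold sgn
  rw [← pow_add]
  congr 1
  rw [Finset.card_filter, sum_split]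
  have h1 : (∑ j : Fin (ℓ+2), if (⟨j.1, by omega⟩ : Fin (Nt + (ℓ+2))) < emb ℓ Nt i
      ∧ glue ℓ Nt σ ⟨j.1, by omega⟩ = true then 1 else 0) = ℓ := by
    have step : ∀ j : Fin (ℓ+2),
        (if (⟨j.1, by omega⟩ : Fin (Nt + (ℓ+2))) < emb ℓ Nt i
          ∧ glue ℓ Nt σ ⟨j.1, by omega⟩ = true then 1 else 0)
        = (if 1 ≤ j.1 ∧ j.1 < ℓ + 1 then (1:ℕ) else 0) := by
      intro j
      have hlt' : j.1 < ℓ + 2 + i.1 := by have := j.isLt; omega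
      have hlt : (⟨j.1, by omega⟩ : Fin (Nt + (ℓ+2))) < emb ℓ Nt i := hlt'
      have hg : glue ℓ Nt σ (⟨j.1, by omega⟩ : Fin (Nt + (ℓ+2)))
          = decide (1 ≤ j.1 ∧ j.1 ≤ ℓ) := glue_low σ _ j.isLt
      by_cases hc : 1 ≤ j.1 ∧ j.1 < ℓ + 1
      · rw [if_pos hc, if_pos ⟨hlt, by rw [hg]; simp only [decide_eq_true_eq]; omega⟩]
      · rw [if_neg hc, if_neg]
        intro ⟨_, hdec⟩
        rw [hg] at hdec
        simp only [decide_eq_true_eq] at hdec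
        omega
    rw [Finset.sum_congr rfl fun j _ => step j, ← Finset.card_filter]
    rw [card_filter_vals (ℓ+2) 1 (ℓ+1) (by omega)]
    omega
  have h2 : (∑ j : Fin Nt, if (⟨ℓ + 2 + j.1, by omega⟩ : Fin (Nt + (ℓ+2))) < emb ℓ Nt i
      ∧ glue ℓ Nt σ ⟨ℓ + 2 + j.1, by omega⟩ = true then 1 else 0)
      = (Finset.univ.filter fun j : Fin Nt => j < i ∧ σ j = true).card := by
    rw [Finset.card_filter]
    refine Finset.sum_congr rfl fun j _ => ?_
    have he : (⟨ℓ + 2 + j.1, by omega⟩ : Fin (Nt + (ℓ+2))) = emb ℓ Nt j := rfl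
    rw [he, glue_emb]
    have hiff : emb ℓ Nt j < emb ℓ Nt i ↔ j < i := by
      simp only [emb, Fin.mk_lt_mk]; omega
    by_cases hc : j < i ∧ σ j = true
    · rw [if_pos ⟨hiff.2 hc.1, hc.2⟩, if_pos hc]
    · rw [if_neg, if_neg hc]; intro ⟨ha, hb⟩; exact hc ⟨hiff.1 ha, hb⟩
  rw [h1, h2]

lemma sgn_hole (a : Config Nt) (j : Fin (Nt + (ℓ+2))) (h1 : 1 ≤ j.1) (h2 : j.1 ≤ ℓ) :
    sgn (Function.update (glue ℓ Nt a) j false) j = (-1 : ℂ) ^ (j.1 - 1) := by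
  unfold sgn
  congr 1
  have hset : (Finset.univ.filter fun k : Fin (Nt + (ℓ+2)) =>
      k < j ∧ Function.update (glue ℓ Nt a) j false k = true)
      = Finset.univ.filter fun k : Fin (Nt + (ℓ+2)) => 1 ≤ k.1 ∧ k.1 < j.1 := by
    apply Finset.filter_congr
    intro k _
    simp only [Fin.lt_def]
    constructor
    · rintro ⟨hk, hocc⟩
      refine ⟨?_, hk⟩
      by_contra h0
      have hk0 : k.1 = 0 := by omega
      have : k ≠ j := by intro h; rw [h] at hk; omega
      rw [Function.update_of_ne this, glue_zero a k hk0] at hocc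
      exact Bool.false_ne_true hocc
    · rintro ⟨hk1, hk2⟩
      have : k ≠ j := by intro h; rw [h] at hk2; omega
      refine ⟨hk2, ?_⟩
      rw [Function.update_of_ne this]
      exact glue_mid a k hk1 (by omega)
  rw [hset, card_filter_vals (Nt + (ℓ+2)) 1 j.1 (by omega)]

end sgnlem

section ops
variable {ℓ Nt : ℕ} {N : ℕ} {OK : Config N → Prop} {OKN : Config (Nt + (ℓ+2)) → Prop}
  {OKt : Config Nt → Prop}

lemma sum_subtype_collapse (x : Config N) (C : Config N → Prop)
    [∀ y, Decidable (C y)] [Decidable (OK x ∧ C x)]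
    (hC : ∀ y, C y → y = x) (f : Config N → ℂ) :
    (∑ σ : {σ : Config N // OK σ}, if C σ.1 then f σ.1 else 0)
      = if OK x ∧ C x then f x else 0 := by
  by_cases hok : OK x
  · rw [Finset.sum_eq_single (⟨x, hok⟩ : {σ : Config N // OK σ})]
    · by_cases hc : C x
      · rw [if_pos hc, if_pos ⟨hok, hc⟩]
      · rw [if_neg hc, if_neg (fun h => hc h.2)]
    · intro b _ hb
      rw [if_neg]
      intro hc
      exact hb (Subtype.ext (hC b.1 hc))
    · intro h; exact absurd (Finset.mem_univ _) h
  · rw [if_neg (fun h => hok h.1)]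
    apply Finset.sum_eq_zero
    intro σ _
    rw [if_neg]
    intro hc
    exact hok (hC σ.1 hc ▸ σ.2)

lemma Qop_apply (S : Fin N → Prop) (ψ : AState N OK) (τ : {σ : Config N // OK σ}) :
    Qop N OK S ψ τ = ∑ σ : {σ : Config N // OK σ}, ∑ i : Fin N,
      if S i ∧ σ.1 i = false ∧ τ.1 = Function.update σ.1 i true
      then sgn σ.1 i * ψ σ else 0 := by
  show (QmatA N OK S fun _ _ => 1).mulVec ψ τ = _
  unfold Matrix.mulVec dotProduct QmatA
  refine Finset.sum_congr rfl fun σ _ => ?_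
  rw [Finset.sum_mul]
  refine Finset.sum_congr rfl fun i _ => ?_
  by_cases hc : S i ∧ σ.1 i = false ∧ τ.1 = Function.update σ.1 i true
  · rw [if_pos hc, if_pos hc, one_mul]
  · rw [if_neg hc, if_neg hc, zero_mul]

lemma Gop_apply (ψ' : AState Nt OKt) (σ : {σ : Config (Nt + (ℓ+2)) // OKN σ}) :
    Gop ℓ Nt OKN OKt ψ' σ = ∑ σ' : {σ : Config Nt // OKt σ},
      if σ.1 = glue ℓ Nt σ'.1 then ψ' σ' else 0 := by
  show (Gmat ℓ Nt OKN OKt).mulVec ψ' σ = _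
  unfold Matrix.mulVec dotProduct Gmat
  refine Finset.sum_congr rfl fun σ' _ => ?_
  show (if σ.1 = glue ℓ Nt σ'.1 then (1:ℂ) else 0) * ψ' σ' = _
  by_cases hc : σ.1 = glue ℓ Nt σ'.1
  · rw [if_pos hc, if_pos hc, one_mul]
  · rw [if_neg hc, if_neg hc, zero_mul]

lemma Gop_glue (ψ' : AState Nt OKt) (σ' : {σ : Config Nt // OKt σ})
    (σ : {σ : Config (Nt + (ℓ+2)) // OKN σ}) (h : σ.1 = glue ℓ Nt σ'.1) :
    Gop ℓ Nt OKN OKt ψ' σ = ψ' σ' := by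
  rw [Gop_apply]
  rw [Finset.sum_eq_single σ']
  · rw [if_pos h]
  · intro b _ hb
    rw [if_neg]
    intro hc
    exact hb (Subtype.ext (glue_inj (h ▸ hc : glue ℓ Nt σ'.1 = glue ℓ Nt b.1)).symm)
  · intro h; exact absurd (Finset.mem_univ _) h

lemma Gop_nonglue (ψ' : AState Nt OKt) (σ : {σ : Config (Nt + (ℓ+2)) // OKN σ})
    (h : ∀ τ'' : Config Nt, σ.1 ≠ glue ℓ Nt τ'') :
    Gop ℓ Nt OKN OKt ψ' σ = 0 := by
  rw [Gop_apply]
  apply Finset.sum_eq_zero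
  intro σ' _
  rw [if_neg (h σ'.1)]

lemma ite_mul_sum {α : Type*} [Fintype α] (c : Prop) (s : ℂ) (g : α → ℂ) (cs : α → Prop) :
    (if c then s * (∑ x : α, if cs x then g x else 0) else 0)
      = ∑ x : α, if c ∧ cs x then s * g x else 0 := by
  by_cases hc : c
  · rw [if_pos hc, Finset.mul_sum]
    refine Finset.sum_congr rfl fun x _ => ?_
    by_cases hx : cs x
    · rw [if_pos hx, if_pos ⟨hc, hx⟩]
    · rw [if_neg hx, if_neg (fun h => hx h.2), mul_zero]
  · rw [if_neg hc]
    symm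
    apply Finset.sum_eq_zero
    intro x _
    rw [if_neg (fun h => hc h.1)]

end ops

section qg
variable {ℓ Nt : ℕ} {OKN : Config (Nt + (ℓ+2)) → Prop} {OKt : Config Nt → Prop}

def Rsum (ℓ Nt : ℕ) (OKN : Config (Nt + (ℓ+2)) → Prop) (OKt : Config Nt → Prop)
    (ψ' : AState Nt OKt) (τ : {σ : Config (Nt + (ℓ+2)) // OKN σ}) : ℂ :=
  ∑ σ' : {σ : Config Nt // OKt σ}, ∑ i : Fin Nt,
    if OKN (glue ℓ Nt σ'.1) ∧ σ'.1 i = false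
        ∧ τ.1 = glue ℓ Nt (Function.update σ'.1 i true)
    then sgn σ'.1 i * ψ' σ' else 0

lemma QG_eq (ψ' : AState Nt OKt) (τ : {σ : Config (Nt + (ℓ+2)) // OKN σ}) :
    Qop (Nt + (ℓ+2)) OKN (S2 (Nt + (ℓ+2)) ℓ) (Gop ℓ Nt OKN OKt ψ') τ
      = (-1:ℂ)^ℓ * Rsum ℓ Nt OKN OKt ψ' τ := by
  rw [Qop_apply]
  calc
    (∑ σ : {σ : Config (Nt + (ℓ+2)) // OKN σ}, ∑ i : Fin (Nt + (ℓ+2)),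
      if S2 (Nt + (ℓ+2)) ℓ i ∧ σ.1 i = false ∧ τ.1 = Function.update σ.1 i true
      then sgn σ.1 i * Gop ℓ Nt OKN OKt ψ' σ else 0)
      = ∑ σ : {σ : Config (Nt + (ℓ+2)) // OKN σ}, ∑ i : Fin (Nt + (ℓ+2)),
          ∑ σ' : {σ : Config Nt // OKt σ},
          if ((S2 (Nt + (ℓ+2)) ℓ i ∧ σ.1 i = false ∧ τ.1 = Function.update σ.1 i true)
              ∧ σ.1 = glue ℓ Nt σ'.1)
          then sgn σ.1 i * ψ' σ' else 0 := by
        refine Finset.sum_congr rfl fun σ _ => Finset.sum_congr rfl fun i _ => ?_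
        rw [Gop_apply]
        by_cases hc : S2 (Nt + (ℓ+2)) ℓ i ∧ σ.1 i = false
            ∧ τ.1 = Function.update σ.1 i true
        · rw [if_pos hc, Finset.mul_sum]
          refine Finset.sum_congr rfl fun σ' _ => ?_
          by_cases hx : σ.1 = glue ℓ Nt σ'.1
          · rw [if_pos hx, if_pos ⟨hc, hx⟩]
          · rw [if_neg hx, if_neg (fun h => hx h.2), mul_zero]
        · rw [if_neg hc]
          symm
          apply Finset.sum_eq_zero
          intro σ' _
          rw [if_neg (fun h => hc h.1)]
    _ = ∑ i : Fin (Nt + (ℓ+2)), ∑ σ' : {σ : Config Nt // OKt σ},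
          ∑ σ : {σ : Config (Nt + (ℓ+2)) // OKN σ},
          if ((S2 (Nt + (ℓ+2)) ℓ i ∧ σ.1 i = false ∧ τ.1 = Function.update σ.1 i true)
              ∧ σ.1 = glue ℓ Nt σ'.1)
          then sgn σ.1 i * ψ' σ' else 0 := by
        rw [Finset.sum_comm]
        exact Finset.sum_congr rfl fun i _ => Finset.sum_comm
    _ = ∑ i : Fin (Nt + (ℓ+2)), ∑ σ' : {σ : Config Nt // OKt σ},
          (if OKN (glue ℓ Nt σ'.1) ∧ ((S2 (Nt + (ℓ+2)) ℓ i ∧ glue ℓ Nt σ'.1 i = false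
              ∧ τ.1 = Function.update (glue ℓ Nt σ'.1) i true)
              ∧ glue ℓ Nt σ'.1 = glue ℓ Nt σ'.1)
          then sgn (glue ℓ Nt σ'.1) i * ψ' σ' else 0) := by
        refine Finset.sum_congr rfl fun i _ => Finset.sum_congr rfl fun σ' _ => ?_
        exact sum_subtype_collapse (OK := OKN) (glue ℓ Nt σ'.1)
          (fun y => (S2 (Nt + (ℓ+2)) ℓ i ∧ y i = false ∧ τ.1 = Function.update y i true)
            ∧ y = glue ℓ Nt σ'.1)
          (fun y hy => hy.2) (fun y => sgn y i * ψ' σ')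
    _ = ∑ i : Fin Nt, ∑ σ' : {σ : Config Nt // OKt σ},
          (if OKN (glue ℓ Nt σ'.1) ∧ ((S2 (Nt + (ℓ+2)) ℓ (emb ℓ Nt i)
              ∧ glue ℓ Nt σ'.1 (emb ℓ Nt i) = false
              ∧ τ.1 = Function.update (glue ℓ Nt σ'.1) (emb ℓ Nt i) true)
              ∧ glue ℓ Nt σ'.1 = glue ℓ Nt σ'.1)
          then sgn (glue ℓ Nt σ'.1) (emb ℓ Nt i) * ψ' σ' else 0) := by
        rw [sum_split]
        have hlow : (∑ j : Fin (ℓ+2), ∑ σ' : {σ : Config Nt // OKt σ},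
            (if OKN (glue ℓ Nt σ'.1) ∧ ((S2 (Nt + (ℓ+2)) ℓ ⟨j.1, by omega⟩
                ∧ glue ℓ Nt σ'.1 ⟨j.1, by omega⟩ = false
                ∧ τ.1 = Function.update (glue ℓ Nt σ'.1) ⟨j.1, by omega⟩ true)
                ∧ glue ℓ Nt σ'.1 = glue ℓ Nt σ'.1)
            then sgn (glue ℓ Nt σ'.1) ⟨j.1, by omega⟩ * ψ' σ' else 0)) = 0 := by
          apply Finset.sum_eq_zero
          intro j _
          apply Finset.sum_eq_zero
          intro σ' _
          rw [if_neg]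
          rintro ⟨-, ⟨hS2, -, -⟩, -⟩
          have hj := j.isLt
          have : ℓ + 2 ≤ j.1 := hS2
          omega
        rw [hlow, zero_add]
        rfl
    _ = ∑ i : Fin Nt, ∑ σ' : {σ : Config Nt // OKt σ},
          ((-1:ℂ)^ℓ * (if OKN (glue ℓ Nt σ'.1) ∧ σ'.1 i = false
              ∧ τ.1 = glue ℓ Nt (Function.update σ'.1 i true)
          then sgn σ'.1 i * ψ' σ' else 0)) := by
        refine Finset.sum_congr rfl fun i _ => Finset.sum_congr rfl fun σ' _ => ?_
        by_cases hc : OKN (glue ℓ Nt σ'.1) ∧ σ'.1 i = false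
            ∧ τ.1 = glue ℓ Nt (Function.update σ'.1 i true)
        · rw [if_pos hc, if_pos, sgn_glue, mul_assoc]
          refine ⟨hc.1, ⟨?_, ?_, ?_⟩, rfl⟩
          · show ℓ + 2 ≤ (emb ℓ Nt i).1
            simp [emb]
          · rw [glue_emb]; exact hc.2.1
          · rw [update_glue]; exact hc.2.2
        · rw [if_neg hc, mul_zero, if_neg]
          rintro ⟨h1, ⟨-, h2, h3⟩, -⟩
          rw [glue_emb] at h2
          rw [update_glue] at h3
          exact hc ⟨h1, h2, h3⟩
    _ = (-1:ℂ)^ℓ * Rsum ℓ Nt OKN OKt ψ' τ := by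
        unfold Rsum
        rw [Finset.mul_sum]
        rw [Finset.sum_comm]
        refine Finset.sum_congr rfl fun i _ => ?_
        rw [Finset.mul_sum]

end qg

section gq
variable {ℓ Nt : ℕ} {OKN : Config (Nt + (ℓ+2)) → Prop} {OKt : Config Nt → Prop}

lemma GQ_eq (Hglue : ∀ a : Config Nt, OKt a → OKN (glue ℓ Nt a)) (ψ' : AState Nt OKt)
    (τ : {σ : Config (Nt + (ℓ+2)) // OKN σ})
    (hτ : ∀ a : Config Nt, τ.1 = glue ℓ Nt a → OKt a) :
    Gop ℓ Nt OKN OKt (Qop Nt OKt (fun _ => True) ψ') τ = Rsum ℓ Nt OKN OKt ψ' τ := by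
  by_cases hg : ∃ a : Config Nt, τ.1 = glue ℓ Nt a
  · obtain ⟨a, ha⟩ := hg
    have hOK : OKt a := hτ a ha
    rw [Gop_glue _ ⟨a, hOK⟩ τ ha, Qop_apply]
    unfold Rsum
    refine Finset.sum_congr rfl fun σ' _ => Finset.sum_congr rfl fun i _ => ?_
    by_cases hc : σ'.1 i = false ∧ a = Function.update σ'.1 i true
    · rw [if_pos ⟨trivial, hc.1, hc.2⟩, if_pos]
      exact ⟨Hglue σ'.1 σ'.2, hc.1, by rw [ha, hc.2]⟩
    · have hA : ¬ (True ∧ σ'.1 i = false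
          ∧ (⟨a, hOK⟩ : {σ : Config Nt // OKt σ}).1 = Function.update σ'.1 i true) := by
        rintro ⟨-, hc1, hc2⟩; exact hc ⟨hc1, hc2⟩
      have hB : ¬ (OKN (glue ℓ Nt σ'.1) ∧ σ'.1 i = false
          ∧ τ.1 = glue ℓ Nt (Function.update σ'.1 i true)) := by
        rintro ⟨-, hc1, hc2⟩
        exact hc ⟨hc1, glue_inj ((ha.symm.trans hc2) : glue ℓ Nt a = glue ℓ Nt _)⟩
      rw [if_neg hA, if_neg hB]
  · push_neg at hg
    rw [Gop_nonglue _ _ hg]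
    symm
    apply Finset.sum_eq_zero; intro σ' _
    apply Finset.sum_eq_zero; intro i _
    rw [if_neg]
    rintro ⟨-, -, hc2⟩
    exact hg _ hc2

def Dst (ℓ Nt : ℕ) (OKN : Config (Nt + (ℓ+2)) → Prop) (OKt : Config Nt → Prop)
    (ψ' : AState Nt OKt) : AState (Nt + (ℓ+2)) OKN := fun τ =>
  ((-1:ℂ)^ℓ) * Qop (Nt + (ℓ+2)) OKN (S2 (Nt + (ℓ+2)) ℓ) (Gop ℓ Nt OKN OKt ψ') τ
    - Gop ℓ Nt OKN OKt (Qop Nt OKt (fun _ => True) ψ') τ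

lemma Dst_vanish (Hglue : ∀ a : Config Nt, OKt a → OKN (glue ℓ Nt a)) (ψ' : AState Nt OKt)
    (τ : {σ : Config (Nt + (ℓ+2)) // OKN σ})
    (hτ : ∀ a : Config Nt, τ.1 = glue ℓ Nt a → OKt a) :
    Dst ℓ Nt OKN OKt ψ' τ = 0 := by
  unfold Dst
  rw [QG_eq, GQ_eq Hglue ψ' τ hτ, ← mul_assoc, ← mul_pow]
  simp

lemma hole_inj {a b : Config Nt} {ja jb : Fin (Nt + (ℓ+2))} (hja : ja.1 < ℓ+2)
    (hjb : jb.1 < ℓ+2)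
    (h : Function.update (glue ℓ Nt a) ja false = Function.update (glue ℓ Nt b) jb false) :
    a = b := by
  funext i
  have h1 := congrFun h (emb ℓ Nt i)
  have hne1 : emb ℓ Nt i ≠ ja := by
    intro hc; rw [← hc] at hja; simp only [emb] at hja; omega
  have hne2 : emb ℓ Nt i ≠ jb := by
    intro hc; rw [← hc] at hjb; simp only [emb] at hjb; omega
  rwa [Function.update_of_ne hne1, Function.update_of_ne hne2, glue_emb, glue_emb] at h1

def phiSt (ℓ Nt : ℕ) (OKN : Config (Nt + (ℓ+2)) → Prop) (OKt : Config Nt → Prop)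
    (ψ' : AState Nt OKt) (J : Config Nt → Fin (Nt + (ℓ+2))) :
    AState (Nt + (ℓ+2)) OKN := fun σ =>
  if h : ∃ a : Config Nt, ¬ OKt a ∧ OKN (glue ℓ Nt a)
      ∧ σ.1 = Function.update (glue ℓ Nt a) (J a) false
  then ((-1:ℂ)^((J h.choose).1 - 1))
    * Dst ℓ Nt OKN OKt ψ' ⟨glue ℓ Nt h.choose, h.choose_spec.2.1⟩
  else 0

lemma phi_zero (ψ' : AState Nt OKt) (J : Config Nt → Fin (Nt + (ℓ+2)))
    (σ : {σ : Config (Nt + (ℓ+2)) // OKN σ})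
    (h : ¬ ∃ a : Config Nt, ¬ OKt a ∧ OKN (glue ℓ Nt a)
      ∧ σ.1 = Function.update (glue ℓ Nt a) (J a) false) :
    phiSt ℓ Nt OKN OKt ψ' J σ = 0 := dif_neg h

lemma phi_val (ψ' : AState Nt OKt) (J : Config Nt → Fin (Nt + (ℓ+2)))
    (hJb : ∀ a : Config Nt, OKN (glue ℓ Nt a) → ¬ OKt a → 1 ≤ (J a).1 ∧ (J a).1 ≤ ℓ)
    (a : Config Nt) (h2 : ¬ OKt a) (h1 : OKN (glue ℓ Nt a))
    (σ : {σ : Config (Nt + (ℓ+2)) // OKN σ})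
    (hσ : σ.1 = Function.update (glue ℓ Nt a) (J a) false) :
    phiSt ℓ Nt OKN OKt ψ' J σ
      = ((-1:ℂ)^((J a).1 - 1)) * Dst ℓ Nt OKN OKt ψ' ⟨glue ℓ Nt a, h1⟩ := by
  have hP : ∃ b : Config Nt, ¬ OKt b ∧ OKN (glue ℓ Nt b)
      ∧ σ.1 = Function.update (glue ℓ Nt b) (J b) false := ⟨a, h2, h1, hσ⟩
  unfold phiSt
  rw [dif_pos hP]
  obtain ⟨hb2, hb1, hbσ⟩ := hP.choose_spec
  have hab : hP.choose = a := by
    refine hole_inj (ja := J hP.choose) (jb := J a) ?_ ?_ (hbσ.symm.trans hσ)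
    · have := (hJb _ hb1 hb2).2; omega
    · have := (hJb _ h1 h2).2; omega
  have hsub : (⟨glue ℓ Nt hP.choose, hP.choose_spec.2.1⟩ : {σ : Config (Nt + (ℓ+2)) // OKN σ})
      = ⟨glue ℓ Nt a, h1⟩ := Subtype.ext (congrArg (glue ℓ Nt) hab)
  rw [hsub, hab]

end gq

section keysec
variable {ℓ Nt : ℕ} {OKN : Config (Nt + (ℓ+2)) → Prop} {OKt : Config Nt → Prop}

lemma hole_empty_sites (a : Config Nt) (j : Fin (Nt + (ℓ+2))) (hj1 : 1 ≤ j.1)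
    (hj2 : j.1 ≤ ℓ) (i : Fin (Nt + (ℓ+2))) (hi : i.1 < ℓ+2)
    (hempty : Function.update (glue ℓ Nt a) j false i = false) :
    i.1 = 0 ∨ i = j ∨ i.1 = ℓ+1 := by
  by_contra hcon
  push_neg at hcon
  obtain ⟨h0, hij, hL⟩ := hcon
  rw [Function.update_of_ne hij, glue_mid a i (by omega) (by omega)] at hempty
  cases hempty

lemma fill_hole (a : Config Nt) (j : Fin (Nt + (ℓ+2))) (hj1 : 1 ≤ j.1) (hj2 : j.1 ≤ ℓ) :
    Function.update (Function.update (glue ℓ Nt a) j false) j true = glue ℓ Nt a := by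
  rw [Function.update_idem]
  have h : glue ℓ Nt a j = true := glue_mid a j hj1 hj2
  rw [← h, Function.update_eq_self]

lemma key_eval
    (Hmono : ∀ σ τ : Config (Nt + (ℓ+2)), OKN σ → (∀ i, τ i = true → σ i = true) → OKN τ)
    (Hglue : ∀ a : Config Nt, OKt a → OKN (glue ℓ Nt a))
    (J : Config Nt → Fin (Nt + (ℓ+2)))
    (hJ : ∀ a : Config Nt, OKN (glue ℓ Nt a) → ¬ OKt a →
      1 ≤ (J a).1 ∧ (J a).1 ≤ ℓ ∧
      ¬ OKN (Function.update (Function.update (glue ℓ Nt a) (J a) false) ⟨0, by omega⟩ true) ∧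
      ¬ OKN (Function.update (Function.update (glue ℓ Nt a) (J a) false) ⟨ℓ+1, by omega⟩ true))
    (ψ' : AState Nt OKt) (τ : {σ : Config (Nt + (ℓ+2)) // OKN σ}) :
    Qop (Nt + (ℓ+2)) OKN (S1 (Nt + (ℓ+2)) ℓ) (phiSt ℓ Nt OKN OKt ψ' J) τ
      = Dst ℓ Nt OKN OKt ψ' τ := by
  have hJb : ∀ a : Config Nt, OKN (glue ℓ Nt a) → ¬ OKt a →
      1 ≤ (J a).1 ∧ (J a).1 ≤ ℓ := fun a h1 h2 => ⟨(hJ a h1 h2).1, (hJ a h1 h2).2.1⟩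
  rw [Qop_apply]
  by_cases hdef : ∃ a : Config Nt, ¬ OKt a ∧ τ.1 = glue ℓ Nt a
  case neg =>
    push_neg at hdef
    rw [Dst_vanish Hglue ψ' τ (fun a hg => by_contra fun hno => hdef a hno hg)]
    apply Finset.sum_eq_zero; intro σ _
    apply Finset.sum_eq_zero; intro i _
    by_cases hφ : ∃ a : Config Nt, ¬ OKt a ∧ OKN (glue ℓ Nt a)
        ∧ σ.1 = Function.update (glue ℓ Nt a) (J a) false
    · obtain ⟨a, ha2, ha1, hσ⟩ := hφ
      rw [if_neg]
      rintro ⟨hS1, hempty, hupd⟩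
      obtain ⟨hJ1, hJ2, hF0, hFL⟩ := hJ a ha1 ha2
      have hi3 : i.1 = 0 ∨ i = J a ∨ i.1 = ℓ+1 :=
        hole_empty_sites a (J a) hJ1 hJ2 i hS1 (by rw [← hσ]; exact hempty)
      rcases hi3 with h0 | hij | hL
      · apply hF0
        rw [← hσ]
        have hieq : (⟨0, by omega⟩ : Fin (Nt + (ℓ+2))) = i := Fin.ext h0.symm
        rw [hieq, ← hupd]
        exact τ.2
      · apply hdef a ha2
        rw [hupd, hσ, hij]
        exact fill_hole a (J a) hJ1 hJ2
      · apply hFL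
        rw [← hσ]
        have hieq : (⟨ℓ+1, by omega⟩ : Fin (Nt + (ℓ+2))) = i := Fin.ext hL.symm
        rw [hieq, ← hupd]
        exact τ.2
    · rw [phi_zero ψ' J σ hφ, mul_zero, ite_self]
  case pos =>
    obtain ⟨a0, ha2, hga⟩ := hdef
    have ha1 : OKN (glue ℓ Nt a0) := hga ▸ τ.2
    obtain ⟨hJ1, hJ2, hF0, hFL⟩ := hJ a0 ha1 ha2
    have hσ0OK : OKN (Function.update (glue ℓ Nt a0) (J a0) false) := by
      apply Hmono _ _ ha1
      intro i hi
      by_cases hij : i = J a0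
      · rw [hij, Function.update_self] at hi; cases hi
      · rwa [Function.update_of_ne hij] at hi
    rw [Finset.sum_eq_single (⟨Function.update (glue ℓ Nt a0) (J a0) false, hσ0OK⟩ :
      {σ : Config (Nt + (ℓ+2)) // OKN σ})]
    · rw [Finset.sum_eq_single (J a0)]
      · rw [if_pos, sgn_hole a0 (J a0) hJ1 hJ2,
          phi_val ψ' J hJb a0 ha2 ha1 _ rfl]
        · have hτeq : (⟨glue ℓ Nt a0, ha1⟩ : {σ : Config (Nt + (ℓ+2)) // OKN σ}) = τ :=
            Subtype.ext hga.symm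
          rw [hτeq, ← mul_assoc, ← mul_pow]
          simp
        · refine ⟨?_, ?_, ?_⟩
          · show (J a0).1 < ℓ + 2
            omega
          · exact Function.update_self _ _ _
          · rw [fill_hole a0 (J a0) hJ1 hJ2]
            exact hga
      · intro i _ hi
        rw [if_neg]
        rintro ⟨hS1, hempty, hupd⟩
        have hi3 : i.1 = 0 ∨ i = J a0 ∨ i.1 = ℓ+1 :=
          hole_empty_sites a0 (J a0) hJ1 hJ2 i hS1 hempty
        have hτi : τ.1 i = true := by
          rw [hupd]; exact Function.update_self _ _ _
        rcases hi3 with h0 | hij | hL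
        · rw [hga, glue_zero a0 i h0] at hτi; cases hτi
        · exact hi hij
        · rw [hga, glue_top a0 i hL] at hτi; cases hτi
      · intro h; exact absurd (Finset.mem_univ _) h
    · intro σ _ hne
      apply Finset.sum_eq_zero; intro i _
      by_cases hφ : ∃ a : Config Nt, ¬ OKt a ∧ OKN (glue ℓ Nt a)
          ∧ σ.1 = Function.update (glue ℓ Nt a) (J a) false
      · obtain ⟨a, hb2, hb1, hσ⟩ := hφ
        obtain ⟨hK1, hK2, hG0, hGL⟩ := hJ a hb1 hb2
        rw [if_neg]
        rintro ⟨hS1, hempty, hupd⟩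
        have hi3 : i.1 = 0 ∨ i = J a ∨ i.1 = ℓ+1 :=
          hole_empty_sites a (J a) hK1 hK2 i hS1 (by rw [← hσ]; exact hempty)
        have hτi : τ.1 i = true := by
          rw [hupd]; exact Function.update_self _ _ _
        rcases hi3 with h0 | hij | hL
        · rw [hga, glue_zero a0 i h0] at hτi; cases hτi
        · have hgl : τ.1 = glue ℓ Nt a := by
            rw [hupd, hσ, hij]
            exact fill_hole a (J a) hK1 hK2
          have haa : a = a0 := glue_inj (hgl.symm.trans hga)
          apply hne
          apply Subtype.ext
          rw [hσ, haa]
        · rw [hga, glue_top a0 i hL] at hτi; cases hτi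
      · rw [phi_zero ψ' J σ hφ, mul_zero, ite_self]
    · intro h; exact absurd (Finset.mem_univ _) h

end keysec

section mastersec

theorem master (ℓ Nt : ℕ) (OKN : Config (Nt + (ℓ + 2)) → Prop) (OKt : Config Nt → Prop)
    (Hmono : ∀ σ τ : Config (Nt + (ℓ+2)), OKN σ → (∀ i, τ i = true → σ i = true) → OKN τ)
    (Hglue : ∀ a : Config Nt, OKt a → OKN (glue ℓ Nt a))
    (Hdef : ∀ a : Config Nt, ∃ j : Fin (Nt + (ℓ+2)), OKN (glue ℓ Nt a) → ¬ OKt a →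
      1 ≤ j.1 ∧ j.1 ≤ ℓ ∧
      ¬ OKN (Function.update (Function.update (glue ℓ Nt a) j false) ⟨0, by omega⟩ true) ∧
      ¬ OKN (Function.update (Function.update (glue ℓ Nt a) j false) ⟨ℓ+1, by omega⟩ true)) :
    ∀ ψ' : AState Nt OKt, ∃ φ' : AState (Nt + (ℓ + 2)) OKN,
      Qop (Nt + (ℓ + 2)) OKN (S2 (Nt + (ℓ + 2)) ℓ) (Gop ℓ Nt OKN OKt ψ') =
        ((-1 : ℂ) ^ ℓ) •
          (Gop ℓ Nt OKN OKt (Qop Nt OKt (fun _ => True) ψ') +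
            Qop (Nt + (ℓ + 2)) OKN (S1 (Nt + (ℓ + 2)) ℓ) φ') := by
  intro ψ'
  choose J hJ using Hdef
  refine ⟨phiSt ℓ Nt OKN OKt ψ' J, ?_⟩
  funext τ
  have hkey := key_eval Hmono Hglue J hJ ψ' τ
  show Qop (Nt + (ℓ + 2)) OKN (S2 (Nt + (ℓ + 2)) ℓ) (Gop ℓ Nt OKN OKt ψ') τ
    = ((-1 : ℂ) ^ ℓ) * (Gop ℓ Nt OKN OKt (Qop Nt OKt (fun _ => True) ψ') τ
        + Qop (Nt + (ℓ + 2)) OKN (S1 (Nt + (ℓ + 2)) ℓ) (phiSt ℓ Nt OKN OKt ψ' J) τ)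
  rw [hkey]
  unfold Dst
  have hc : ((-1:ℂ)^ℓ) * ((-1:ℂ)^ℓ) = 1 := by rw [← mul_pow]; simp
  generalize Qop (Nt + (ℓ + 2)) OKN (S2 (Nt + (ℓ + 2)) ℓ) (Gop ℓ Nt OKN OKt ψ') τ = X
  generalize Gop ℓ Nt OKN OKt (Qop Nt OKt (fun _ => True) ψ') τ = Y
  linear_combination (-X) * hc

end mastersec

section bc1
variable {ℓ Nt : ℕ}

lemma extc_lt {N : ℕ} (σ : Config N) (t : ℕ) (h : t < N) : extc σ t = σ ⟨t, h⟩ :=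
  dif_pos h

lemma extc_mono {N : ℕ} {σ τ : Config N} (hle : ∀ i, τ i = true → σ i = true) (t : ℕ)
    (h : extc τ t = true) : extc σ t = true := by
  unfold extc at *
  by_cases ht : t < N
  · rw [dif_pos ht] at h ⊢; exact hle _ h
  · rw [dif_neg ht] at h; cases h

lemma mono_per (M : ℕ) (σ τ : Config M) (hσ : PerOK M ℓ σ)
    (hle : ∀ i, τ i = true → σ i = true) : PerOK M ℓ τ := by
  intro i
  obtain ⟨k, hk, hfalse⟩ := hσ i
  refine ⟨k, hk, ?_⟩
  by_contra h
  rw [Bool.not_eq_false] at h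
  rw [hle _ h] at hfalse
  cases hfalse

lemma mono_open (M c₁ cN : ℕ) (σ τ : Config M) (hσ : OpenOK M ℓ c₁ cN σ)
    (hle : ∀ i, τ i = true → σ i = true) : OpenOK M ℓ c₁ cN τ := by
  obtain ⟨h1, h2, h3⟩ := hσ
  refine ⟨?_, ?_, ?_⟩
  · intro b hall
    exact h1 b (fun k hk => extc_mono hle _ (hall k hk))
  · rintro ⟨ha, hb⟩
    exact h2 ⟨ha, fun k hk => extc_mono hle _ (hb k hk)⟩
  · rintro ⟨ha, hb⟩
    exact h3 ⟨ha, fun k hk => extc_mono hle _ (hb k hk)⟩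

lemma extc_glue_low (a : Config Nt) (t : ℕ) (h : t < ℓ + 2) :
    extc (glue ℓ Nt a) t = decide (1 ≤ t ∧ t ≤ ℓ) := by
  rw [extc_lt _ _ (by omega)]
  exact glue_low a _ h

lemma cyc_val {M : ℕ} (i : Fin M) (k : ℕ) : (cyc i k).1 = (i.1 + k) % M := rfl

lemma glue_per (hℓ : 1 ≤ ℓ) (hNt : ℓ < Nt) (a : Config Nt) (h : PerOK Nt ℓ a) :
    PerOK (Nt + (ℓ+2)) ℓ (glue ℓ Nt a) := by
  intro i
  rcases Nat.lt_or_ge i.1 (ℓ + 2) with hi | hi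
  · rcases Nat.eq_zero_or_pos i.1 with h0 | h0
    · refine ⟨0, by omega, ?_⟩
      have hc : cyc i 0 = i := Fin.ext (by rw [cyc_val, Nat.add_zero, Nat.mod_eq_of_lt i.isLt])
      rw [hc]
      exact glue_zero a i h0
    · refine ⟨ℓ + 1 - i.1, by omega, ?_⟩
      have hc : (cyc i (ℓ + 1 - i.1)).1 = ℓ + 1 := by
        rw [cyc_val]
        have : i.1 + (ℓ + 1 - i.1) = ℓ + 1 := by omega
        rw [this, Nat.mod_eq_of_lt (by omega)]
      exact glue_top a _ hc
  · set i' : Fin Nt := ⟨i.1 - (ℓ+2), by have := i.isLt; omega⟩ with hi'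
    obtain ⟨k, hk, hfalse⟩ := h i'
    by_cases hw : i'.1 + k < Nt
    · refine ⟨k, hk, ?_⟩
      have hc : cyc i k = emb ℓ Nt ⟨i'.1 + k, hw⟩ := by
        apply Fin.ext
        rw [cyc_val]
        simp only [emb]
        have hlt : i.1 + k < Nt + (ℓ+2) := by simp only [hi'] at hw ⊢; omega
        rw [Nat.mod_eq_of_lt hlt]
        simp only [hi'] at hw ⊢
        omega
      rw [hc, glue_emb]
      have hceq : cyc i' k = ⟨i'.1 + k, hw⟩ := Fin.ext (by rw [cyc_val, Nat.mod_eq_of_lt hw])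
      rwa [hceq] at hfalse
    · refine ⟨Nt - i'.1, by omega, ?_⟩
      apply glue_zero
      rw [cyc_val]
      have : i.1 + (Nt - i'.1) = Nt + (ℓ+2) := by simp only [hi']; omega
      rw [this, Nat.mod_self]

lemma glue_open (hℓ : 1 ≤ ℓ) (hNt : ℓ < Nt) (c₁ cN : ℕ) (hcN : cN ≤ ℓ) (a : Config Nt)
    (h : OpenOK Nt ℓ c₁ cN a) : OpenOK (Nt + (ℓ+2)) ℓ c₁ cN (glue ℓ Nt a) := by
  obtain ⟨h1, h2, h3⟩ := h
  refine ⟨?_, ?_, ?_⟩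
  · intro b hall
    rcases Nat.eq_zero_or_pos b with hb | hb
    · have := hall 0 (by omega)
      rw [hb, extc_glue_low a 0 (by omega)] at this
      simp at this
    · by_cases hb2 : b ≤ ℓ + 1
      · have := hall (ℓ + 1 - b) (by omega)
        have hsum : b + (ℓ + 1 - b) = ℓ + 1 := by omega
        rw [hsum, extc_glue_low a (ℓ+1) (by omega)] at this
        simp at this
      · apply h1 (b - (ℓ+2))
        intro k hk
        have := hall k hk
        have harith : b + k = ℓ + 2 + (b - (ℓ+2) + k) := by omega
        rwa [harith, extc_glue] at this
  · rintro ⟨-, hall⟩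
    have := hall 0 (by omega)
    rw [extc_glue_low a 0 (by omega)] at this
    simp at this
  · rintro ⟨-, hall⟩
    apply h3
    refine ⟨by omega, fun k hk => ?_⟩
    have := hall k hk
    have harith : Nt + (ℓ+2) - 1 - k = ℓ + 2 + (Nt - 1 - k) := by omega
    rwa [harith, extc_glue] at this

end bc1

section bc2
variable {ℓ Nt : ℕ}

lemma def_open (hℓ : 1 ≤ ℓ) (hNt : ℓ < Nt) (c₁ cN : ℕ) (hc1 : c₁ ≤ ℓ) (hcN : cN ≤ ℓ) :
    ∀ a : Config Nt, ∃ j : Fin (Nt + (ℓ+2)),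
      OpenOK (Nt + (ℓ+2)) ℓ c₁ cN (glue ℓ Nt a) → ¬ OpenOK Nt ℓ c₁ cN a →
      1 ≤ j.1 ∧ j.1 ≤ ℓ ∧
      ¬ OpenOK (Nt + (ℓ+2)) ℓ c₁ cN
        (Function.update (Function.update (glue ℓ Nt a) j false) ⟨0, by omega⟩ true) ∧
      ¬ OpenOK (Nt + (ℓ+2)) ℓ c₁ cN
        (Function.update (Function.update (glue ℓ Nt a) j false) ⟨ℓ+1, by omega⟩ true) := by
  intro a
  refine ⟨⟨c₁+1, by omega⟩, ?_⟩
  intro hg hna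
  obtain ⟨g1, g2, g3⟩ := hg
  have hA : ∀ b, ¬ ∀ k ≤ ℓ, extc a (b+k) = true := by
    intro b hall
    apply g1 (ℓ+2+b)
    intro k hk
    have harith : ℓ+2+b+k = ℓ+2+(b+k) := by omega
    rw [harith, extc_glue]
    exact hall k hk
  have hC : ¬ (cN+1 ≤ Nt ∧ ∀ k ≤ cN, extc a (Nt-1-k) = true) := by
    rintro ⟨hle, hall⟩
    apply g3
    refine ⟨by omega, fun k hk => ?_⟩
    have harith : Nt+(ℓ+2)-1-k = ℓ+2+(Nt-1-k) := by omega
    rw [harith, extc_glue]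
    exact hall k hk
  have hB : c₁+1 ≤ Nt ∧ ∀ k ≤ c₁, extc a k = true := by
    by_contra hB
    exact hna ⟨hA, hB, hC⟩
  have hc1lt : c₁ < ℓ := by
    by_contra hcc
    apply hA 0
    intro k hk
    rw [Nat.zero_add]
    exact hB.2 k (by omega)
  refine ⟨(by omega : 1 ≤ c₁+1), (by omega : c₁+1 ≤ ℓ), ?_, ?_⟩
  · rintro ⟨-, k2, -⟩
    apply k2
    refine ⟨by omega, fun k hk => ?_⟩
    rw [extc_lt _ _ (by omega : k < Nt + (ℓ+2))]
    rcases Nat.eq_zero_or_pos k with h0 | h0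
    · have heq : (⟨k, by omega⟩ : Fin (Nt+(ℓ+2))) = ⟨0, by omega⟩ := Fin.ext h0
      rw [heq, Function.update_self]
    · have hne0 : (⟨k, by omega⟩ : Fin (Nt+(ℓ+2))) ≠ ⟨0, by omega⟩ :=
        Fin.ne_of_val_ne (show k ≠ 0 by omega)
      have hnej : (⟨k, by omega⟩ : Fin (Nt+(ℓ+2))) ≠ ⟨c₁+1, by omega⟩ :=
        Fin.ne_of_val_ne (show k ≠ c₁+1 by omega)
      rw [Function.update_of_ne hne0, Function.update_of_ne hnej]
      exact glue_mid a _ (show 1 ≤ k from h0) (show k ≤ ℓ by omega)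
  · rintro ⟨k1, -, -⟩
    apply k1 (c₁+2)
    intro k hk
    rw [extc_lt _ _ (by omega : c₁+2+k < Nt+(ℓ+2))]
    by_cases hs1 : c₁+2+k ≤ ℓ
    · have hneL : (⟨c₁+2+k, by omega⟩ : Fin (Nt+(ℓ+2))) ≠ ⟨ℓ+1, by omega⟩ :=
        Fin.ne_of_val_ne (show c₁+2+k ≠ ℓ+1 by omega)
      have hnej : (⟨c₁+2+k, by omega⟩ : Fin (Nt+(ℓ+2))) ≠ ⟨c₁+1, by omega⟩ :=
        Fin.ne_of_val_ne (show c₁+2+k ≠ c₁+1 by omega)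
      rw [Function.update_of_ne hneL, Function.update_of_ne hnej]
      exact glue_mid a _ (show 1 ≤ c₁+2+k by omega) (show c₁+2+k ≤ ℓ from hs1)
    · by_cases hs2 : c₁+2+k = ℓ+1
      · have heq : (⟨c₁+2+k, by omega⟩ : Fin (Nt+(ℓ+2))) = ⟨ℓ+1, by omega⟩ := Fin.ext hs2
        rw [heq, Function.update_self]
      · have hneL : (⟨c₁+2+k, by omega⟩ : Fin (Nt+(ℓ+2))) ≠ ⟨ℓ+1, by omega⟩ :=
          Fin.ne_of_val_ne (show c₁+2+k ≠ ℓ+1 from hs2)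
        have hnej : (⟨c₁+2+k, by omega⟩ : Fin (Nt+(ℓ+2))) ≠ ⟨c₁+1, by omega⟩ :=
          Fin.ne_of_val_ne (show c₁+2+k ≠ c₁+1 by omega)
        have heq : (⟨c₁+2+k, by omega⟩ : Fin (Nt+(ℓ+2)))
            = emb ℓ Nt ⟨c₁+2+k-(ℓ+2), by omega⟩ := Fin.ext (by simp only [emb]; omega)
        rw [Function.update_of_ne hneL, Function.update_of_ne hnej, heq, glue_emb]
        have := hB.2 (c₁+2+k-(ℓ+2)) (by omega)
        rwa [extc_lt _ _ (by omega)] at this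

end bc2

section bc3
variable {ℓ Nt : ℕ}

lemma def_per (hℓ : 1 ≤ ℓ) (hNt : ℓ < Nt) :
    ∀ a : Config Nt, ∃ j : Fin (Nt + (ℓ+2)),
      PerOK (Nt + (ℓ+2)) ℓ (glue ℓ Nt a) → ¬ PerOK Nt ℓ a →
      1 ≤ j.1 ∧ j.1 ≤ ℓ ∧
      ¬ PerOK (Nt + (ℓ+2)) ℓ
        (Function.update (Function.update (glue ℓ Nt a) j false) ⟨0, by omega⟩ true) ∧
      ¬ PerOK (Nt + (ℓ+2)) ℓ
        (Function.update (Function.update (glue ℓ Nt a) j false) ⟨ℓ+1, by omega⟩ true) := by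
  intro a
  by_cases hd : PerOK (Nt + (ℓ+2)) ℓ (glue ℓ Nt a) ∧ ¬ PerOK Nt ℓ a
  case neg =>
    exact ⟨⟨1, by omega⟩, fun hg hna => absurd ⟨hg, hna⟩ hd⟩
  case pos =>
  obtain ⟨hg, hna⟩ := hd
  unfold PerOK at hna
  push_neg at hna
  obtain ⟨i₀, hall'⟩ := hna
  have hall : ∀ k ≤ ℓ, a (cyc i₀ k) = true := by
    intro k hk
    have := hall' k hk
    cases h : a (cyc i₀ k)
    · exact absurd h this
    · rfl
  have hi0 := i₀.isLt
  set m := Nt - i₀.1 with hm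
  have hm1 : 1 ≤ m := by omega
  have hmle : m ≤ ℓ := by
    by_contra hcon
    obtain ⟨k, hk, hfalse⟩ := hg (emb ℓ Nt i₀)
    have hceq : cyc (emb ℓ Nt i₀) k = emb ℓ Nt ⟨i₀.1 + k, by omega⟩ := by
      apply Fin.ext
      rw [cyc_val]
      simp only [emb]
      rw [Nat.mod_eq_of_lt (by omega)]
      omega
    rw [hceq, glue_emb] at hfalse
    have htrue := hall k hk
    have hceq2 : cyc i₀ k = ⟨i₀.1 + k, by omega⟩ :=
      Fin.ext (by rw [cyc_val]; exact Nat.mod_eq_of_lt (by omega))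
    rw [hceq2] at htrue
    rw [htrue] at hfalse
    cases hfalse
  have hlead : ∀ t : ℕ, t ≤ ℓ - m → ∀ (h : t < Nt), a ⟨t, h⟩ = true := by
    intro t ht h
    have := hall (m + t) (by omega)
    have hceq : cyc i₀ (m + t) = ⟨t, h⟩ := by
      apply Fin.ext
      rw [cyc_val]
      have harith : i₀.1 + (m + t) = Nt + t := by omega
      rw [harith, Nat.add_mod_left]
      exact Nat.mod_eq_of_lt h
    rwa [hceq] at this
  have htrail : ∀ t : ℕ, t < m → ∀ (h : Nt - 1 - t < Nt), a ⟨Nt - 1 - t, h⟩ = true := by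
    intro t ht h
    have := hall (m - 1 - t) (by omega)
    have hceq : cyc i₀ (m - 1 - t) = ⟨Nt - 1 - t, h⟩ := by
      apply Fin.ext
      rw [cyc_val]
      have harith : i₀.1 + (m - 1 - t) = Nt - 1 - t := by omega
      rw [harith]
      exact Nat.mod_eq_of_lt (by omega)
    rwa [hceq] at this
  refine ⟨⟨ℓ+1-m, by omega⟩, fun _ _ => ⟨(by omega : 1 ≤ ℓ+1-m), (by omega : ℓ+1-m ≤ ℓ), ?_, ?_⟩⟩
  · -- filling site 0 creates a cyclic run of length ℓ+1
    intro hper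
    obtain ⟨k, hk, hfalse⟩ := hper ⟨Nt + (ℓ+2) - m, by omega⟩
    suffices htrue : Function.update (Function.update (glue ℓ Nt a) ⟨ℓ+1-m, by omega⟩ false)
        (⟨0, by omega⟩ : Fin (Nt + (ℓ+2))) true (cyc ⟨Nt + (ℓ+2) - m, by omega⟩ k) = true by
      rw [htrue] at hfalse; cases hfalse
    by_cases hkm : k < m
    · have hceq : cyc (⟨Nt + (ℓ+2) - m, by omega⟩ : Fin (Nt + (ℓ+2))) k
          = emb ℓ Nt ⟨Nt - m + k, by omega⟩ := by
        apply Fin.ext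
        rw [cyc_val]
        simp only [emb]
        rw [Nat.mod_eq_of_lt (by omega)]
        omega
      have hne0 : emb ℓ Nt ⟨Nt - m + k, by omega⟩ ≠ ⟨0, by omega⟩ :=
        Fin.ne_of_val_ne (show ℓ + 2 + (Nt - m + k) ≠ 0 by omega)
      have hnej : emb ℓ Nt ⟨Nt - m + k, by omega⟩ ≠ ⟨ℓ+1-m, by omega⟩ :=
        Fin.ne_of_val_ne (show ℓ + 2 + (Nt - m + k) ≠ ℓ+1-m by omega)
      rw [hceq, Function.update_of_ne hne0, Function.update_of_ne hnej, glue_emb]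
      have heq2 : (⟨Nt - m + k, by omega⟩ : Fin Nt) = ⟨Nt - 1 - (m - 1 - k), by omega⟩ :=
        Fin.ext (show Nt - m + k = Nt - 1 - (m - 1 - k) by omega)
      rw [heq2]
      exact htrail (m - 1 - k) (by omega) _
    · have hcv : (cyc (⟨Nt + (ℓ+2) - m, by omega⟩ : Fin (Nt + (ℓ+2))) k).1 = k - m := by
        rw [cyc_val]
        have harith : Nt + (ℓ+2) - m + k = (Nt + (ℓ+2)) + (k - m) := by omega
        rw [harith, Nat.add_mod_left]
        exact Nat.mod_eq_of_lt (by omega)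
      by_cases hk0 : k = m
      · have hceq0 : cyc (⟨Nt + (ℓ+2) - m, by omega⟩ : Fin (Nt + (ℓ+2))) k = ⟨0, by omega⟩ :=
          Fin.ext (hcv.trans (show k - m = 0 by omega))
        rw [hceq0, Function.update_self]
      · have hne0 : cyc (⟨Nt + (ℓ+2) - m, by omega⟩ : Fin (Nt + (ℓ+2))) k ≠ ⟨0, by omega⟩ :=
          Fin.ne_of_val_ne (fun h => absurd (hcv.symm.trans h) (show ¬ (k - m = 0) by omega))
        have hnej : cyc (⟨Nt + (ℓ+2) - m, by omega⟩ : Fin (Nt + (ℓ+2))) k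
            ≠ ⟨ℓ+1-m, by omega⟩ := Fin.ne_of_val_ne (fun h => absurd (hcv.symm.trans h) (show ¬ (k - m = ℓ+1-m) by omega))
        rw [Function.update_of_ne hne0, Function.update_of_ne hnej]
        exact glue_mid a _ ((show 1 ≤ k - m by omega).trans_eq hcv.symm) (hcv.trans_le (show k - m ≤ ℓ by omega))
  · -- filling site ℓ+1 creates a run of length ℓ+1 starting at j+1
    intro hper
    obtain ⟨k, hk, hfalse⟩ := hper ⟨ℓ+2-m, by omega⟩
    suffices htrue : Function.update (Function.update (glue ℓ Nt a) ⟨ℓ+1-m, by omega⟩ false)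
        (⟨ℓ+1, by omega⟩ : Fin (Nt + (ℓ+2))) true (cyc ⟨ℓ+2-m, by omega⟩ k) = true by
      rw [htrue] at hfalse; cases hfalse
    have hcv : (cyc (⟨ℓ+2-m, by omega⟩ : Fin (Nt + (ℓ+2))) k).1 = ℓ+2-m+k := by
      rw [cyc_val]
      exact (show (ℓ+2-m+k) % (Nt + (ℓ+2)) = ℓ+2-m+k from Nat.mod_eq_of_lt (by omega))
    by_cases hs1 : ℓ+2-m+k ≤ ℓ
    · have hneL : cyc (⟨ℓ+2-m, by omega⟩ : Fin (Nt + (ℓ+2))) k ≠ ⟨ℓ+1, by omega⟩ :=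
        Fin.ne_of_val_ne (fun h => absurd (hcv.symm.trans h) (show ¬ (ℓ+2-m+k = ℓ+1) by omega))
      have hnej : cyc (⟨ℓ+2-m, by omega⟩ : Fin (Nt + (ℓ+2))) k ≠ ⟨ℓ+1-m, by omega⟩ :=
        Fin.ne_of_val_ne (fun h => absurd (hcv.symm.trans h) (show ¬ (ℓ+2-m+k = ℓ+1-m) by omega))
      rw [Function.update_of_ne hneL, Function.update_of_ne hnej]
      exact glue_mid a _ ((show 1 ≤ ℓ+2-m+k by omega).trans_eq hcv.symm)
        (hcv.trans_le (show ℓ+2-m+k ≤ ℓ from hs1))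
    · by_cases hs2 : ℓ+2-m+k = ℓ+1
      · have hceq : cyc (⟨ℓ+2-m, by omega⟩ : Fin (Nt + (ℓ+2))) k = ⟨ℓ+1, by omega⟩ :=
          Fin.ext (hcv.trans (show ℓ+2-m+k = ℓ+1 from hs2))
        rw [hceq, Function.update_self]
      · have hceq : cyc (⟨ℓ+2-m, by omega⟩ : Fin (Nt + (ℓ+2))) k
            = emb ℓ Nt ⟨k - m, by omega⟩ :=
          Fin.ext (hcv.trans (show ℓ+2-m+k = ℓ+2+(k-m) by omega))
        have hneL : emb ℓ Nt ⟨k - m, by omega⟩ ≠ ⟨ℓ+1, by omega⟩ :=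
          Fin.ne_of_val_ne (show ℓ+2+(k-m) ≠ ℓ+1 by omega)
        have hnej : emb ℓ Nt ⟨k - m, by omega⟩ ≠ ⟨ℓ+1-m, by omega⟩ :=
          Fin.ne_of_val_ne (show ℓ+2+(k-m) ≠ ℓ+1-m by omega)
        rw [hceq, Function.update_of_ne hneL, Function.update_of_ne hnej, glue_emb]
        exact hlead (k - m) (by omega) _

end bc3
/-- Commutation of `Q₂` with `G`: for a chain of `N = Ñ + (ℓ+2) > 2ℓ+2` sites with
periodic or special boundary conditions and every `ψ' ∈ V_Ñ`, there is a state
`φ' ∈ V_N` with `Q₂ (G ψ') = (-1)^ℓ (G (Q̃ ψ') + Q₁ φ')`, where `Q̃` is the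
supercharge of the `Ñ`-site chain. -/
theorem Q2_commutes_with_G (ℓ Nt : ℕ) (hℓ : 1 ≤ ℓ) (hNt : ℓ < Nt)
    (OKN : Config (Nt + (ℓ + 2)) → Prop) (OKt : Config Nt → Prop)
    (hBC : (OKN = PerOK (Nt + (ℓ + 2)) ℓ ∧ OKt = PerOK Nt ℓ) ∨
      ∃ c₁ cN, c₁ ≤ ℓ ∧ cN ≤ ℓ ∧
        OKN = OpenOK (Nt + (ℓ + 2)) ℓ c₁ cN ∧ OKt = OpenOK Nt ℓ c₁ cN) :
    ∀ ψ' : AState Nt OKt, ∃ φ' : AState (Nt + (ℓ + 2)) OKN,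
      Qop (Nt + (ℓ + 2)) OKN (S2 (Nt + (ℓ + 2)) ℓ) (Gop ℓ Nt OKN OKt ψ') =
        ((-1 : ℂ) ^ ℓ) •
          (Gop ℓ Nt OKN OKt (Qop Nt OKt (fun _ => True) ψ') +
            Qop (Nt + (ℓ + 2)) OKN (S1 (Nt + (ℓ + 2)) ℓ) φ') := by
  rcases hBC with ⟨hN, ht⟩ | ⟨c₁, cN, hc1, hcN, hN, ht⟩
  · subst hN; subst ht
    exact master ℓ Nt _ _ (fun σ τ h hle => mono_per _ σ τ h hle)
      (fun a ha => glue_per hℓ hNt a ha) (def_per hℓ hNt)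
  · subst hN; subst ht
    exact master ℓ Nt _ _ (fun σ τ h hle => mono_open _ c₁ cN σ τ h hle)
      (fun a ha => glue_open hℓ hNt c₁ cN hcN a ha) (def_open hℓ hNt c₁ cN hc1 hcN)

end
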